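/- For every ε ∈ (0, 1) there exists h₀(ε) such that for every finite abelian group G of order h' > h₀(ε) and every subset A ⊆ G, at least one of the following holds: (i) there exist elements x₁, …, x_k ∈ A with |s({x₁, …, x_k})| > ε²·h' and k < (log h')/(log 2 − ε/2); (ii) there exist elements x₁, …, x_k ∈ A with k < (log h')/(log 2 − ε/2) and a subset Ω ⊆ G with |Ω| < ε·h' and A ⊆ {x₁, …, x_k} ∪ Ω. -/

import Mathlib

/-- The set of all subset sums of a finite set `A` in an additive commutative group. -/
def subsetSums {G : Type*} [AddCommGroup G] [DecidableEq G] (A : Finset G) : Finset G :=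
  A.powerset.image fun B => ∑ x ∈ B, x


lemma zero_mem_subsetSums {G : Type*} [AddCommGroup G] [DecidableEq G] (X : Finset G) :
    0 ∈ subsetSums X :=
  Finset.mem_image.2 ⟨∅, Finset.mem_powerset.2 (Finset.empty_subset X), Finset.sum_empty⟩

lemma subsetSums_insert {G : Type*} [AddCommGroup G] [DecidableEq G] (x : G) (X : Finset G)
    (hx : x ∉ X) :
    subsetSums (insert x X) = subsetSums X ∪ (subsetSums X).image (· + x) := by
  ext g
  simp only [subsetSums, Finset.mem_union, Finset.mem_image, Finset.mem_powerset]
  constructor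
  · rintro ⟨B, hB, rfl⟩
    by_cases hxB : x ∈ B
    · right
      refine ⟨∑ y ∈ B.erase x, y, ⟨B.erase x, ?_, rfl⟩, Finset.sum_erase_add _ _ hxB⟩
      intro a ha
      have h2 := hB (Finset.mem_of_mem_erase ha)
      rcases Finset.mem_insert.1 h2 with h | h
      · subst h; exact absurd ha (Finset.notMem_erase a B)
      · exact h
    · left
      refine ⟨B, ?_, rfl⟩
      intro a ha
      rcases Finset.mem_insert.1 (hB ha) with h | h
      · subst h; exact absurd ha hxB
      · exact h
  · rintro (⟨B, hB, rfl⟩ | ⟨g, ⟨B, hB, rfl⟩, rfl⟩)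
    · exact ⟨B, hB.trans (Finset.subset_insert _ _), rfl⟩
    · refine ⟨insert x B, Finset.insert_subset_insert _ hB, ?_⟩
      rw [Finset.sum_insert (fun h => hx (hB h)), add_comm]

lemma sum_inter_card {G : Type*} [AddCommGroup G] [Fintype G] [DecidableEq G] (S : Finset G) :
    ∑ y : G, (S ∩ S.image (· + y)).card = S.card * S.card := by
  have h1 : ∀ y : G, (S ∩ S.image (· + y)).card = (S.filter fun a => a - y ∈ S).card := by
    intro y; congr 1; ext a
    simp only [Finset.mem_inter, Finset.mem_filter, Finset.mem_image]
    constructor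
    · rintro ⟨ha, b, hb, rfl⟩; exact ⟨ha, by simpa using hb⟩
    · rintro ⟨ha, hb⟩; exact ⟨ha, a - y, hb, by abel⟩
  simp only [h1, Finset.card_filter]
  rw [Finset.sum_comm]
  have h2 : ∀ a ∈ S, (∑ y : G, if a - y ∈ S then 1 else 0) = S.card := by
    intro a _
    rw [← Finset.card_filter]
    have : (Finset.univ.filter fun y => a - y ∈ S) = S.image (fun s => a - s) := by
      ext y
      simp only [Finset.mem_filter, Finset.mem_univ, true_and, Finset.mem_image]
      constructor
      · intro h; exact ⟨a - y, h, by abel⟩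
      · rintro ⟨s, hs, rfl⟩; simpa using hs
    rw [this, Finset.card_image_of_injective _ (fun u v h => by
      have := congrArg (fun z => a - z) h; simpa using this)]
  rw [Finset.sum_congr rfl h2, Finset.sum_const, smul_eq_mul]

lemma exists_enum {G : Type*} [DecidableEq G] (X : Finset G) :
    ∃ x : Fin X.card → G, Finset.image x Finset.univ = X := by
  refine ⟨fun i => (X.equivFin.symm i : G), ?_⟩
  ext a
  simp only [Finset.mem_image, Finset.mem_univ, true_and]
  constructor
  · rintro ⟨i, rfl⟩; exact (X.equivFin.symm i).2
  · intro ha; exact ⟨X.equivFin ⟨a, ha⟩, by simp⟩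

open Finset

set_option maxHeartbeats 2000000 in
theorem stmt6 (ε : ℝ) (hε : 0 < ε) (hε1 : ε < 1) :
    ∃ h₀ : ℕ, ∀ (G : Type) [AddCommGroup G] [Fintype G] [DecidableEq G],
      h₀ < Fintype.card G →
      ∀ A : Finset G,
        (∃ (k : ℕ) (x : Fin k → G), (∀ i, x i ∈ A) ∧
          ε ^ 2 * (Fintype.card G : ℝ) < ((subsetSums (Finset.image x Finset.univ)).card : ℝ) ∧
          (k : ℝ) < Real.log (Fintype.card G) / (Real.log 2 - ε / 2)) ∨
        (∃ (k : ℕ) (x : Fin k → G) (Ω : Finset G), (∀ i, x i ∈ A) ∧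
          (k : ℝ) < Real.log (Fintype.card G) / (Real.log 2 - ε / 2) ∧
          (Ω.card : ℝ) < ε * (Fintype.card G : ℝ) ∧
          A ⊆ Finset.image x Finset.univ ∪ Ω) := by
  have hlog2 : (0.69 : ℝ) < Real.log 2 := by
    have h := Real.log_two_gt_d9; norm_num at h ⊢; linarith
  have hc : (0:ℝ) < Real.log 2 - ε / 2 := by linarith
  set c : ℝ := Real.log 2 - ε / 2 with hcdef
  set μ : ℝ := (ε / 2) / c with hμdef
  have hμ : 0 < μ := by positivity
  have h2ε : (0:ℝ) < 2 - ε := by linarith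
  have h1ε : (0:ℝ) < 1 - ε := by linarith
  set K : ℝ := 1 / (ε * c * (2 - ε)) with hKdef
  have hK : 0 < K := by positivity
  set β : ℝ := K / (1 - ε) with hβdef
  have hβ : 0 < β := by positivity
  refine ⟨max 1 ⌈Real.exp (β * c / μ)⌉₊, ?_⟩
  intro G _ _ _ hcard A
  set h' : ℕ := Fintype.card G with hh'def
  have hh2 : 1 < h' := lt_of_le_of_lt (le_max_left _ _) hcard
  have hH : (0:ℝ) < (h' : ℝ) := by
    have : 0 < h' := by omega
    exact_mod_cast this
  have hexp : Real.exp (β * c / μ) < (h' : ℝ) := by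
    have h1 : ⌈Real.exp (β * c / μ)⌉₊ < h' := lt_of_le_of_lt (le_max_right _ _) hcard
    calc Real.exp (β * c / μ) ≤ (⌈Real.exp (β * c / μ)⌉₊ : ℝ) := Nat.le_ceil _
      _ < (h' : ℝ) := by exact_mod_cast h1
  have hlogh : β * c / μ < Real.log h' := (Real.lt_log_iff_exp_lt hH).2 hexp
  have hlogh0 : 0 < Real.log h' := lt_of_le_of_lt (by positivity) hlogh
  -- final k bound
  have kbound : ∀ k : ℕ, (1 + μ) * k ≤ Real.log h' / c + β → (k : ℝ) < Real.log h' / c := by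
    intro k hk
    have hβμ : β < μ * (Real.log h' / c) := by
      rw [div_lt_iff₀ hμ] at hlogh
      rw [show μ * (Real.log (h':ℝ) / c) = μ * Real.log (h':ℝ) / c from by ring,
        lt_div_iff₀ hc]
      linarith
    nlinarith [hk, hβμ, hμ, mul_pos hμ (div_pos hlogh0 hc)]
  -- invariant implies final bound
  have final : ∀ X : Finset G,
      (1 + μ) * (X.card : ℝ) ≤ Real.log (subsetSums X).card / c
        + β * (subsetSums X).card / (h' : ℝ) →
      (X.card : ℝ) < Real.log h' / c := by
    intro X hInv
    apply kbound
    have h1 : (1:ℝ) ≤ ((subsetSums X).card : ℝ) := by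
      exact_mod_cast Finset.card_pos.2 ⟨0, zero_mem_subsetSums X⟩
    have h2 : ((subsetSums X).card : ℝ) ≤ (h' : ℝ) := by
      exact_mod_cast Finset.card_le_univ (subsetSums X)
    have h3 : Real.log (subsetSums X).card ≤ Real.log h' := by
      apply Real.log_le_log (by linarith) h2
    have h4 : β * (subsetSums X).card / (h' : ℝ) ≤ β := by
      rw [div_le_iff₀ hH]; nlinarith
    have h5 : Real.log (subsetSums X).card / c ≤ Real.log h' / c := by
      exact div_le_div_of_nonneg_right h3 hc.le
    linarith
  -- main loop
  have main : ∀ n : ℕ, ∀ X : Finset G, X ⊆ A →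
      h' - (subsetSums X).card ≤ n →
      (1 + μ) * (X.card : ℝ) ≤ Real.log (subsetSums X).card / c
        + β * (subsetSums X).card / (h' : ℝ) →
      ((∃ (k : ℕ) (x : Fin k → G), (∀ i, x i ∈ A) ∧
          ε ^ 2 * (h' : ℝ) < ((subsetSums (Finset.image x Finset.univ)).card : ℝ) ∧
          (k : ℝ) < Real.log h' / c) ∨
        (∃ (k : ℕ) (x : Fin k → G) (Ω : Finset G), (∀ i, x i ∈ A) ∧
          (k : ℝ) < Real.log h' / c ∧
          (Ω.card : ℝ) < ε * (h' : ℝ) ∧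
          A ⊆ Finset.image x Finset.univ ∪ Ω)) := by
    have caseI : ∀ X : Finset G, X ⊆ A →
        (1 + μ) * (X.card : ℝ) ≤ Real.log (subsetSums X).card / c
          + β * (subsetSums X).card / (h' : ℝ) →
        ε ^ 2 * (h' : ℝ) < ((subsetSums X).card : ℝ) →
        ((∃ (k : ℕ) (x : Fin k → G), (∀ i, x i ∈ A) ∧
            ε ^ 2 * (h' : ℝ) < ((subsetSums (Finset.image x Finset.univ)).card : ℝ) ∧
            (k : ℝ) < Real.log h' / c) ∨
          (∃ (k : ℕ) (x : Fin k → G) (Ω : Finset G), (∀ i, x i ∈ A) ∧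
            (k : ℝ) < Real.log h' / c ∧
            (Ω.card : ℝ) < ε * (h' : ℝ) ∧
            A ⊆ Finset.image x Finset.univ ∪ Ω)) := by
      intro X hXA hInv hbig
      obtain ⟨x, hx⟩ := exists_enum X
      left
      refine ⟨X.card, x, ?_, ?_, final X hInv⟩
      · intro i
        apply hXA
        rw [← hx]
        exact Finset.mem_image_of_mem _ (Finset.mem_univ i)
      · rw [hx]; exact hbig
    intro n
    induction n with
    | zero =>
      intro X hXA hn hInv
      apply caseI X hXA hInv
      have h1 : h' ≤ (subsetSums X).card := by omega
      have hle : ((h' : ℕ) : ℝ) ≤ ((subsetSums X).card : ℝ) := by exact_mod_cast h1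
      have hε2 : ε ^ 2 < 1 := by nlinarith
      nlinarith [hH, hε2, hle]
    | succ n ih =>
      intro X hXA hn hInv
      by_cases hbig : ε ^ 2 * (h' : ℝ) < ((subsetSums X).card : ℝ)
      · exact caseI X hXA hInv hbig
      push_neg at hbig
      set S := subsetSums X with hSdef
      set Ω : Finset G := Finset.univ.filter
        (fun y => (S.card : ℝ) ^ 2 / (ε * (h' : ℝ)) < ((S ∩ S.image (· + y)).card : ℝ)) with hΩdef
      have hs1 : (1:ℝ) ≤ (S.card : ℝ) := by
        exact_mod_cast Finset.card_pos.2 ⟨0, zero_mem_subsetSums X⟩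
      by_cases hstuck : ∀ a ∈ A, a ∈ X ∨ a ∈ Ω
      · -- case (ii)
        obtain ⟨x, hx⟩ := exists_enum X
        right
        refine ⟨X.card, x, Ω, ?_, final X hInv, ?_, ?_⟩
        · intro i
          apply hXA
          rw [← hx]
          exact Finset.mem_image_of_mem _ (Finset.mem_univ i)
        · -- Markov bound
          rcases Ω.eq_empty_or_nonempty with hΩe | hΩne
          · rw [hΩe]; simpa using by positivity
          · set t : ℝ := (S.card : ℝ) ^ 2 / (ε * (h' : ℝ)) with htdef
            have ht0 : 0 < t := by positivity
            have h1 : (Ω.card : ℝ) * t < ∑ y ∈ Ω, ((S ∩ S.image (· + y)).card : ℝ) := by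
              have h2 := Finset.sum_lt_sum_of_nonempty hΩne
                (f := fun _ => t)
                (g := fun y => ((S ∩ S.image (· + y)).card : ℝ))
                (fun y hy => (Finset.mem_filter.1 hy).2)
              simpa [Finset.sum_const, nsmul_eq_mul] using h2
            have h2 : ∑ y ∈ Ω, ((S ∩ S.image (· + y)).card : ℝ)
                ≤ ∑ y : G, ((S ∩ S.image (· + y)).card : ℝ) := by
              apply Finset.sum_le_sum_of_subset_of_nonneg (Finset.subset_univ _)
              intro i _ _; positivity
            have h3 : ∑ y : G, ((S ∩ S.image (· + y)).card : ℝ) = (S.card : ℝ) ^ 2 := by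
              rw [← Nat.cast_sum, sum_inter_card]; push_cast; ring
            have ht : t * (ε * (h' : ℝ)) = (S.card : ℝ) ^ 2 := by
              rw [htdef]; field_simp
            have h4 : (Ω.card : ℝ) * t < (ε * (h' : ℝ)) * t := by
              rw [mul_comm (ε * (h' : ℝ)) t, ht]; linarith
            exact lt_of_mul_lt_mul_right h4 (le_of_lt ht0)
        · intro a ha
          rcases hstuck a ha with h | h
          · exact Finset.mem_union_left _ (by rw [hx]; exact h)
          · exact Finset.mem_union_right _ h
      · -- good step
        push_neg at hstuck
        obtain ⟨x, hxA, hxX, hxΩ⟩ := hstuck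
        have hov : ((S ∩ S.image (· + x)).card : ℝ) ≤ (S.card : ℝ) ^ 2 / (ε * (h' : ℝ)) := by
          by_contra hcon
          push_neg at hcon
          exact hxΩ (Finset.mem_filter.2 ⟨Finset.mem_univ x, hcon⟩)
        have hSins : subsetSums (insert x X) = S ∪ S.image (· + x) := subsetSums_insert x X hxX
        have himg : (S.image (· + x)).card = S.card :=
          Finset.card_image_of_injective _ (add_left_injective x)
        have hcards : (S ∪ S.image (· + x)).card + (S ∩ S.image (· + x)).card
            = 2 * S.card := by
          rw [Finset.card_union_add_card_inter, himg]
          ring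
        -- real abbreviations
        set s : ℝ := (S.card : ℝ) with hsdef
        set s' : ℝ := ((subsetSums (insert x X)).card : ℝ) with hs'def
        set ov : ℝ := ((S ∩ S.image (· + x)).card : ℝ) with hovdef
        have hs'eq : s' + ov = 2 * s := by
          rw [hs'def, hovdef, hsdef, hSins]
          exact_mod_cast hcards
        have hu2 : s / (ε * (h' : ℝ)) ≤ ε := by
          rw [div_le_iff₀ (by positivity)]
          nlinarith
        have hts : (s : ℝ) ^ 2 / (ε * (h' : ℝ)) ≤ ε * s := by
          have : (s:ℝ)^2 / (ε * (h':ℝ)) = s * (s / (ε * (h':ℝ))) := by ring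
          rw [this]
          nlinarith
        have hovs : ov ≤ ε * s := le_trans hov hts
        have hcardlt : S.card < (subsetSums (insert x X)).card := by
          have hlt : ov < s := by nlinarith
          rw [hovdef, hsdef] at hlt
          have h5 : (S ∩ S.image (· + x)).card < S.card := by exact_mod_cast hlt
          rw [hSins]
          omega
        have hmeas : h' - (subsetSums (insert x X)).card ≤ n := by
          have : (subsetSums X).card ≤ h' := Finset.card_le_univ _
          omega
        -- invariant step
        have hsub : insert x X ⊆ A := Finset.insert_subset hxA hXA
        have hcardins : (insert x X).card = X.card + 1 := Finset.card_insert_of_notMem hxX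
        have hs'pos : (1:ℝ) ≤ s' := by
          rw [hs'def]
          exact_mod_cast Finset.card_pos.2 ⟨0, zero_mem_subsetSums _⟩
        have hgrow : s * (2 - s / (ε * (h' : ℝ))) ≤ s' := by
          have : s * (2 - s / (ε * (h':ℝ))) = 2 * s - s^2 / (ε * (h':ℝ)) := by ring
          rw [this]
          linarith
        have hu0 : 0 ≤ s / (ε * (h' : ℝ)) := by positivity
        have hlogstep : Real.log 2 - (s / (ε * (h' : ℝ))) / (2 - ε) ≤ Real.log s' - Real.log s := by
          set u : ℝ := s / (ε * (h' : ℝ)) with hudef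
          have h2u : 0 < 2 - u := by linarith
          have hl1 : Real.log (s * (2 - u)) ≤ Real.log s' :=
            Real.log_le_log (by nlinarith) hgrow
          have hl2 : Real.log (s * (2 - u)) = Real.log s + Real.log (2 - u) := by
            rw [Real.log_mul (by linarith) (by linarith)]
          have hl3 : Real.log (2 / (2 - u)) ≤ 2 / (2 - u) - 1 :=
            Real.log_le_sub_one_of_pos (by positivity)
          have hl4 : Real.log (2 / (2 - u)) = Real.log 2 - Real.log (2 - u) := by
            rw [Real.log_div (by norm_num) (by linarith)]
          have hl5 : 2 / (2 - u) - 1 = u / (2 - u) := by field_simp; ring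
          have hl6 : u / (2 - u) ≤ u / (2 - ε) := by
            apply div_le_div_of_nonneg_left hu0 h2ε
            linarith
          have hl7 : Real.log 2 - u / (2 - ε) ≤ Real.log (2 - u) := by linarith
          linarith
        have e3 : (Real.log 2 - (s / (ε * (h' : ℝ))) / (2 - ε)) / c
            = 1 + μ - K * s / (h' : ℝ) := by
          rw [hμdef, hKdef]
          have hεne : ε ≠ 0 := ne_of_gt hε
          have hcne : c ≠ 0 := ne_of_gt hc
          have hHne : (h' : ℝ) ≠ 0 := ne_of_gt hH
          have h2εne : (2 - ε) ≠ 0 := ne_of_gt h2ε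
          have hlg : Real.log 2 = c + ε / 2 := by rw [hcdef]; ring
          rw [hlg]
          field_simp
        have e2 : Real.log s' / c - Real.log s / c ≥ 1 + μ - K * s / (h' : ℝ) := by
          rw [← e3, ← sub_div]
          exact div_le_div_of_nonneg_right hlogstep hc.le
        have e4 : β * s' / (h' : ℝ) - β * s / (h' : ℝ) ≥ K * s / (h' : ℝ) := by
          rw [← sub_div, ← mul_sub]
          apply div_le_div_of_nonneg_right _ hH.le
          have hKβ : K = β * (1 - ε) := by rw [hβdef]; field_simp
          have hss : (1 - ε) * s ≤ s' - s := by nlinarith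
          calc K * s = β * ((1 - ε) * s) := by rw [hKβ]; ring
            _ ≤ β * (s' - s) := by nlinarith
        have hstep : (1 + μ) * ((X.card : ℝ) + 1) ≤ Real.log s' / c + β * s' / (h' : ℝ) := by
          linarith [hInv, e2, e4]
        refine ih (insert x X) hsub hmeas ?_
        rw [hcardins]
        push_cast
        rw [← hs'def]
        linarith [hstep]
  -- kick off
  have hstart := main h' ∅ (Finset.empty_subset A) (by omega) ?_
  · exact hstart
  · have hSe : subsetSums (∅ : Finset G) = {0} := by
      simp [subsetSums]
    rw [hSe]
    simp
    positivity
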